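/- If the finite Markov chains 𝒳 and 𝒴 are stationary (i.e., their initial distributions are stationary for their respective kernels), then for every probability distribution p on ℕ and every cost matrix C: X×Y → ℝ₊, one has d_OTM^p(𝒳,𝒴;C) ≤ d_OTC(𝒳,𝒴;C). -/

import Mathlib

open scoped BigOperators
open Filter Topology

/-- A probability vector on a finite type. -/
def IsProb {X : Type*} [Fintype X] (ν : X → ℝ) : Prop :=
  (∀ x, 0 ≤ ν x) ∧ ∑ x, ν x = 1

/-- `μ` is a coupling of `α` and `β`. -/
def IsCoupling {X Y : Type*} [Fintype X] [Fintype Y]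
    (μ : X × Y → ℝ) (α : X → ℝ) (β : Y → ℝ) : Prop :=
  (∀ z, 0 ≤ μ z) ∧ (∀ x, ∑ y, μ (x, y) = α x) ∧ (∀ y, ∑ x, μ (x, y) = β y)

/-- A finite Markov chain: a transition kernel together with an initial distribution. -/
structure MarkovChain (X : Type*) [Fintype X] where
  kernel : X → X → ℝ
  init : X → ℝ
  kernel_prob : ∀ x, IsProb (kernel x)
  init_prob : IsProb init

/-- A Markovian coupling between two finite Markov chains.  `trans t` is the
transition coupling used from time `t` to time `t+1` (i.e. `m^{(t+1)}`). -/
structure MarkovCoupling {X Y : Type*} [Fintype X] [Fintype Y]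
    (MX : MarkovChain X) (MY : MarkovChain Y) where
  init : X × Y → ℝ
  trans : ℕ → X × Y → X × Y → ℝ
  init_coupling : IsCoupling init MX.init MY.init
  trans_coupling : ∀ t xy, IsCoupling (trans t xy) (MX.kernel xy.1) (MY.kernel xy.2)

/-- Time-`t` law determined by an initial distribution and step kernels. -/
noncomputable def lawAux {X Y : Type*} [Fintype X] [Fintype Y]
    (ν : X × Y → ℝ) (m : ℕ → X × Y → X × Y → ℝ) : ℕ → X × Y → ℝ
  | 0 => ν
  | t + 1 => fun z => ∑ w : X × Y, m t w z * lawAux ν m t w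

/-- The time-`t` law of a Markovian coupling. -/
noncomputable def MarkovCoupling.law {X Y : Type*} [Fintype X] [Fintype Y]
    {MX : MarkovChain X} {MY : MarkovChain Y} (π : MarkovCoupling MX MY) :
    ℕ → X × Y → ℝ :=
  lawAux π.init π.trans

/-- `p` is a probability distribution on `ℕ`. -/
def IsProbNat (p : ℕ → ℝ) : Prop := (∀ t, 0 ≤ p t) ∧ HasSum p 1

/-- The Optimal Transport Markov (OTM) distance associated to `p`. -/
noncomputable def dOTM {X Y : Type*} [Fintype X] [Fintype Y] (p : ℕ → ℝ)
    (MX : MarkovChain X) (MY : MarkovChain Y) (C : X × Y → ℝ) : ℝ :=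
  ⨅ π : MarkovCoupling MX MY, ∑' t, p t * ∑ z : X × Y, C z * π.law t z

/-- A Markovian coupling is time homogeneous if its transition couplings do not
depend on the time index. -/
def IsTimeHomogeneous {X Y : Type*} [Fintype X] [Fintype Y]
    {MX : MarkovChain X} {MY : MarkovChain Y} (π : MarkovCoupling MX MY) : Prop :=
  ∀ t, π.trans t = π.trans 0

/-- The initial coupling is stationary for the coupled transition kernel. -/
def HasStationaryInit {X Y : Type*} [Fintype X] [Fintype Y]
    {MX : MarkovChain X} {MY : MarkovChain Y} (π : MarkovCoupling MX MY) : Prop :=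
  ∀ z' : X × Y, ∑ z : X × Y, π.trans 0 z z' * π.init z = π.init z'

/-- A Markov chain is stationary if its initial distribution is stationary for its kernel. -/
def IsStationaryMC {X : Type*} [Fintype X] (M : MarkovChain X) : Prop :=
  ∀ x', ∑ x, M.kernel x x' * M.init x = M.init x'

/-- The optimal transition coupling (OTC) distance. -/
noncomputable def dOTC {X Y : Type*} [Fintype X] [Fintype Y]
    (MX : MarkovChain X) (MY : MarkovChain Y) (C : X × Y → ℝ) : ℝ :=
  ⨅ π : {π : MarkovCoupling MX MY // IsTimeHomogeneous π ∧ HasStationaryInit π},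
    ∑ z : X × Y, C z * π.1.init z


lemma law_nonneg {X Y : Type*} [Fintype X] [Fintype Y]
    {MX : MarkovChain X} {MY : MarkovChain Y} (π : MarkovCoupling MX MY) :
    ∀ t z, 0 ≤ π.law t z := by
  intro t
  induction t with
  | zero => exact π.init_coupling.1
  | succ t ih =>
    intro z
    refine Finset.sum_nonneg fun w _ => mul_nonneg ?_ (ih w)
    exact (π.trans_coupling t w).1 z

lemma law_stationary {X Y : Type*} [Fintype X] [Fintype Y]
    {MX : MarkovChain X} {MY : MarkovChain Y} (π : MarkovCoupling MX MY)
    (hth : IsTimeHomogeneous π) (hst : HasStationaryInit π) :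
    ∀ t, π.law t = π.init := by
  intro t
  induction t with
  | zero => rfl
  | succ t ih =>
    funext z
    show ∑ w : X × Y, π.trans t w z * π.law t w = π.init z
    rw [ih, hth t]
    exact hst z

lemma feasible_nonempty {X Y : Type*} [Fintype X] [Fintype Y]
    (MX : MarkovChain X) (MY : MarkovChain Y)
    (hMX : IsStationaryMC MX) (hMY : IsStationaryMC MY) :
    Nonempty {π : MarkovCoupling MX MY // IsTimeHomogeneous π ∧ HasStationaryInit π} := by
  refine ⟨⟨⟨fun z => MX.init z.1 * MY.init z.2,
    fun _ z w => MX.kernel z.1 w.1 * MY.kernel z.2 w.2, ?_, ?_⟩, ?_, ?_⟩⟩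
  · refine ⟨fun z => mul_nonneg (MX.init_prob.1 z.1) (MY.init_prob.1 z.2), fun x => ?_, fun y => ?_⟩
    · show ∑ y, MX.init x * MY.init y = MX.init x
      rw [← Finset.mul_sum, MY.init_prob.2, mul_one]
    · show ∑ x, MX.init x * MY.init y = MY.init y
      rw [← Finset.sum_mul, MX.init_prob.2, one_mul]
  · intro t xy
    refine ⟨fun z => mul_nonneg ((MX.kernel_prob xy.1).1 z.1) ((MY.kernel_prob xy.2).1 z.2),
      fun x => ?_, fun y => ?_⟩
    · show ∑ y, MX.kernel xy.1 x * MY.kernel xy.2 y = MX.kernel xy.1 x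
      rw [← Finset.mul_sum, (MY.kernel_prob xy.2).2, mul_one]
    · show ∑ x, MX.kernel xy.1 x * MY.kernel xy.2 y = MY.kernel xy.2 y
      rw [← Finset.sum_mul, (MX.kernel_prob xy.1).2, one_mul]
  · intro t; rfl
  · intro z'
    have : ∑ z : X × Y, MX.kernel z.1 z'.1 * MY.kernel z.2 z'.2 * (MX.init z.1 * MY.init z.2)
        = (∑ x, MX.kernel x z'.1 * MX.init x) * (∑ y, MY.kernel y z'.2 * MY.init y) := by
      rw [Finset.sum_mul_sum, Fintype.sum_prod_type]
      exact Finset.sum_congr rfl fun x _ => Finset.sum_congr rfl fun y _ => by ring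
    simp only [this, hMX z'.1, hMY z'.2]

/-- For stationary Markov chains, the OTC distance is an upper bound for every
OTM distance. -/
theorem stmt2 {X Y : Type*} [Fintype X] [Fintype Y]
    (MX : MarkovChain X) (MY : MarkovChain Y)
    (hMX : IsStationaryMC MX) (hMY : IsStationaryMC MY)
    (C : X × Y → ℝ) (hC : ∀ z, 0 ≤ C z)
    (p : ℕ → ℝ) (hp : IsProbNat p) :
    dOTM p MX MY C ≤ dOTC MX MY C := by
  haveI := feasible_nonempty MX MY hMX hMY
  refine le_ciInf fun π => ?_
  obtain ⟨π, hth, hst⟩ := π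
  have hval : ∑' t, p t * ∑ z : X × Y, C z * π.law t z = ∑ z : X × Y, C z * π.init z := by
    have hlaw := law_stationary π hth hst
    have : (fun t => p t * ∑ z : X × Y, C z * π.law t z)
        = fun t => p t * ∑ z : X × Y, C z * π.init z := by
      funext t; rw [hlaw t]
    rw [this]
    rw [(hp.2.mul_right _).tsum_eq, one_mul]
  calc dOTM p MX MY C ≤ ∑' t, p t * ∑ z : X × Y, C z * π.law t z := by
        refine ciInf_le ⟨0, ?_⟩ π
        rintro _ ⟨σ, rfl⟩
        refine tsum_nonneg fun t => mul_nonneg (hp.1 t) (Finset.sum_nonneg fun z _ =>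
          mul_nonneg (hC z) (law_nonneg σ t z))
    _ = ∑ z : X × Y, C z * π.init z := hval
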